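/- Let G be a finite group with index-2 subgroup H, κ ∈ G \ H an involution with ι(h) = κhκ for h ∈ H, and χ an irreducible character of H with ε(χ) = ±1 that extends to G, with Ind_H^G(χ) = χ' + χ'' a sum of two extensions. Then ε(χ') + ε(χ'') = ε(χ) + ε_ι(χ). -/

import Mathlib

/-- Let `G` be a finite group, `H` an index-2 subgroup, `κ ∈ G \ H` an involution, and
`ι` the automorphism `h ↦ κhκ` of `H`.  Let `χ` be an irreducible character of `H` with
Frobenius–Schur indicator `ε(χ) = ±1`, which extends to `G`, with
`Ind_H^G(χ) = χ' + χ''` the sum of its two extensions.  Then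
`ε(χ') + ε(χ'') = ε(χ) + ε_ι(χ)`, where `ε(ψ) = (1/|G|)Σ_g ψ(g²)` (analogously for `H`)
and `ε_ι(χ) = (1/|H|)Σ_h χ(h·ι(h))`. -/
theorem fs_indicators_of_extensions (G : Type) [Group G] [Fintype G]
    (H : Subgroup G) [DecidablePred (fun g : G => g ∈ H)]
    (hH : H.index = 2)
    (κ : G) (hκH : κ ∉ H) (hκ2 : κ * κ = 1)
    (ι : H ≃* H) (hι : ∀ h : H, ((ι h : G)) = κ * (h : G) * κ)
    (χ : H → ℂ) (hχ : ∃ V : FDRep ℂ H, CategoryTheory.Simple V ∧ χ = V.character)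
    (hε : (1 / (Fintype.card H : ℂ)) * ∑ h : H, χ (h * h) = 1 ∨
          (1 / (Fintype.card H : ℂ)) * ∑ h : H, χ (h * h) = -1)
    (χ' χ'' : G → ℂ)
    (hχ' : ∃ W : FDRep ℂ G, CategoryTheory.Simple W ∧ χ' = W.character)
    (hχ'' : ∃ W : FDRep ℂ G, CategoryTheory.Simple W ∧ χ'' = W.character)
    (hext' : ∀ h : H, χ' (h : G) = χ h)
    (hext'' : ∀ h : H, χ'' (h : G) = χ h)
    (hind : ∀ g : G, (1 / (Fintype.card H : ℂ)) *
        ∑ x : G, (if hx : x * g * x⁻¹ ∈ H then χ ⟨x * g * x⁻¹, hx⟩ else 0)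
      = χ' g + χ'' g) :
    (1 / (Fintype.card G : ℂ)) * ∑ g : G, χ' (g * g)
      + (1 / (Fintype.card G : ℂ)) * ∑ g : G, χ'' (g * g)
      = (1 / (Fintype.card H : ℂ)) * ∑ h : H, χ (h * h)
        + (1 / (Fintype.card H : ℂ)) * ∑ h : H, χ (h * ι h) := by
  classical
  have hG0 : (Fintype.card G : ℂ) ≠ 0 := Nat.cast_ne_zero.mpr Fintype.card_ne_zero
  have hκinv : κ⁻¹ = κ := inv_eq_of_mul_eq_one_right hκ2
  -- the summand of the induced character at g*g
  set D : G → ℂ := fun g => if hx : g * g ∈ H then χ ⟨g * g, hx⟩ else 0 with hD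
  -- Step A: conjugation-invariance
  have stepA : ∀ x : G, (∑ g : G,
      (if hx : x * (g * g) * x⁻¹ ∈ H then χ ⟨x * (g * g) * x⁻¹, hx⟩ else 0))
      = ∑ g : G, D g := by
    intro x
    refine (Fintype.sum_equiv ((Equiv.mulLeft x⁻¹).trans (Equiv.mulRight x))
      _ (fun g => if hx : x * (g * g) * x⁻¹ ∈ H then χ ⟨x * (g * g) * x⁻¹, hx⟩ else 0) ?_).symm
    intro g
    simp only [Equiv.trans_apply, Equiv.coe_mulLeft, Equiv.coe_mulRight, hD]
    have key : x * ((x⁻¹ * g * x) * (x⁻¹ * g * x)) * x⁻¹ = g * g := by group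
    simp only [key]
  -- Step B: splitting G into the two cosets
  have hκ' : ∀ h : H, (h : G) * κ ∉ H := by
    intro h hm
    exact hκH (by simpa using H.mul_mem (H.inv_mem h.2) hm)
  have hco : ∀ g : G, g ∉ H → g * κ ∈ H := by
    intro g hg
    rw [Subgroup.mul_mem_iff_of_index_two hH]
    exact iff_of_false hg hκH
  let e : H ⊕ H ≃ G :=
  { toFun := Sum.elim (fun h => (h : G)) (fun h => (h : G) * κ)
    invFun := fun g => if hg : g ∈ H then Sum.inl ⟨g, hg⟩ else Sum.inr ⟨g * κ, hco g hg⟩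
    left_inv := by
      rintro (h | h)
      · simp [h.2]
      · simp only [Sum.elim_inr, dif_neg (hκ' h)]
        congr 1
        refine (dif_neg (hκ' h)).trans ?_
        congr 1
        ext
        simp [mul_assoc, hκ2]
    right_inv := by
      intro g
      by_cases hg : g ∈ H
      · simp [hg]
      · simp [hg, mul_assoc, hκ2] }
  have stepB : ∑ g : G, D g = (∑ h : H, χ (h * h)) + ∑ h : H, χ (h * ι h) := by
    rw [← Fintype.sum_equiv e (fun s => D (e s)) D (fun s => rfl), Fintype.sum_sum_type]
    congr 1
    · refine Fintype.sum_congr _ _ fun h => ?_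
      show D ((h : G)) = χ (h * h)
      simp only [hD]
      rw [dif_pos (H.mul_mem h.2 h.2)]
      rfl
    · refine Fintype.sum_congr _ _ fun h => ?_
      have hm : ((h : G) * κ) * ((h : G) * κ) = ((h * ι h : H) : G) := by
        push_cast [hι h]
        group
      show D ((h : G) * κ) = χ (h * ι h)
      simp only [hD]
      rw [dif_pos (hm ▸ (h * ι h).2)]
      congr 1
      exact Subtype.ext hm
  -- Step C: put it together
  have hcomb : (1 / (Fintype.card G : ℂ)) * ∑ g : G, χ' (g * g)
      + (1 / (Fintype.card G : ℂ)) * ∑ g : G, χ'' (g * g)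
      = (1 / (Fintype.card G : ℂ)) * ∑ g : G, (χ' (g * g) + χ'' (g * g)) := by
    rw [← mul_add, ← Finset.sum_add_distrib]
  rw [hcomb]
  have hsum : ∑ g : G, (χ' (g * g) + χ'' (g * g))
      = (Fintype.card G : ℂ) * ((1 / (Fintype.card H : ℂ)) *
          ((∑ h : H, χ (h * h)) + ∑ h : H, χ (h * ι h))) := by
    calc ∑ g : G, (χ' (g * g) + χ'' (g * g))
        = ∑ g : G, (1 / (Fintype.card H : ℂ)) *
            ∑ x : G, (if hx : x * (g * g) * x⁻¹ ∈ H then χ ⟨x * (g * g) * x⁻¹, hx⟩ else 0) := by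
          exact Finset.sum_congr rfl fun g _ => (hind (g * g)).symm
      _ = (1 / (Fintype.card H : ℂ)) * ∑ g : G, ∑ x : G,
            (if hx : x * (g * g) * x⁻¹ ∈ H then χ ⟨x * (g * g) * x⁻¹, hx⟩ else 0) := by
          rw [Finset.mul_sum]
      _ = (1 / (Fintype.card H : ℂ)) * ∑ x : G, ∑ g : G,
            (if hx : x * (g * g) * x⁻¹ ∈ H then χ ⟨x * (g * g) * x⁻¹, hx⟩ else 0) := by
          rw [Finset.sum_comm]
      _ = (1 / (Fintype.card H : ℂ)) * ∑ x : G, ∑ g : G, D g := by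
          rw [Finset.sum_congr rfl fun x _ => stepA x]
      _ = (Fintype.card G : ℂ) * ((1 / (Fintype.card H : ℂ)) *
            ((∑ h : H, χ (h * h)) + ∑ h : H, χ (h * ι h))) := by
          rw [Finset.sum_const, Finset.card_univ, stepB, nsmul_eq_mul]
          ring
  rw [hsum, ← mul_assoc, one_div, inv_mul_cancel₀ hG0, one_mul, mul_add]
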